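/- Let f_p: ℝ^p → ℝ∪{+∞} be lsc, proper, symmetric, and convex; let f: L2(0,1) → ℝ∪{+∞} be a symmetric, lsc, proper, convex L2 embedding of f_p; and let 𝔄: P₂(ℝ) → PR₁ satisfy prox[f](Y) = 𝔄(law of Y)∘Y for every Y ∈ L2(0,1). Then for every y ∈ ℝ^p and every i ∈ {1,…,p}: (prox[f_p](y))_i = 𝔄(μ_y)(y_i), where μ_y = (1/p)Σ_{j=1}^p δ_{y_j} is the empirical distribution of the coordinates of y. -/

import Mathlib

open MeasureTheory ProbabilityTheory Filter
open scoped ENNReal NNReal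

noncomputable section

/-- Lebesgue measure restricted to the interval `(0,1)`. -/
def unitMeasure : Measure ℝ := volume.restrict (Set.Ioo (0:ℝ) 1)

/-- The Hilbert space `L2(0,1)`. -/
abbrev L2 : Type := Lp ℝ 2 unitMeasure

/-- The law (pushforward of Lebesgue measure on `(0,1)`) of `X ∈ L2(0,1)`. -/
def lawOf (X : L2) : Measure ℝ := Measure.map (fun t => X t) unitMeasure

/-- The joint law of a pair of elements of `L2(0,1)`. -/
def lawOf2 (X G : L2) : Measure (ℝ × ℝ) :=
  Measure.map (fun t => (X t, G t)) unitMeasure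

/-- Membership in the Wasserstein space `P₂(ℝ)`. -/
def MemP2 (μ : Measure ℝ) : Prop :=
  IsProbabilityMeasure μ ∧ Integrable (fun x : ℝ => x ^ 2) μ

/-- Membership in the Wasserstein space `P₂(ℝ²)`. -/
def MemP2Prod (π : Measure (ℝ × ℝ)) : Prop :=
  IsProbabilityMeasure π ∧ Integrable (fun q : ℝ × ℝ => q.1 ^ 2 + q.2 ^ 2) π

/-- `π` is a coupling of `μ` and `ν`. -/
def IsCoupling (π : Measure (ℝ × ℝ)) (μ ν : Measure ℝ) : Prop :=
  π.fst = μ ∧ π.snd = ν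

/-- Squared Wasserstein-2 distance on `P₂(ℝ)`. -/
def W2sq (μ ν : Measure ℝ) : ℝ :=
  sInf {r : ℝ | ∃ π : Measure (ℝ × ℝ), IsCoupling π μ ν ∧ r = ∫ q, (q.1 - q.2) ^ 2 ∂π}

/-- The Wasserstein-2 distance on `P₂(ℝ)`. -/
def W2 (μ ν : Measure ℝ) : ℝ := Real.sqrt (W2sq μ ν)

/-- Squared Wasserstein-2 distance on `P₂(ℝ²)` (Euclidean cost). -/
def W2sqProd (μ ν : Measure (ℝ × ℝ)) : ℝ :=
  sInf {r : ℝ | ∃ π : Measure ((ℝ × ℝ) × (ℝ × ℝ)), π.fst = μ ∧ π.snd = ν ∧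
    r = ∫ q, ((q.1.1 - q.2.1) ^ 2 + (q.1.2 - q.2.2) ^ 2) ∂π}

/-- The Wasserstein-2 distance on `P₂(ℝ²)`. -/
def W2Prod (μ ν : Measure (ℝ × ℝ)) : ℝ := Real.sqrt (W2sqProd μ ν)

/-- Convexity of an `ℝ ∪ {+∞}`-valued function. -/
def ConvexE {E : Type*} [AddCommMonoid E] [Module ℝ E] (f : E → EReal) : Prop :=
  ∀ x y : E, ∀ a b : ℝ, 0 ≤ a → 0 ≤ b → a + b = 1 →
    f (a • x + b • y) ≤ (a : EReal) * f x + (b : EReal) * f y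

/-- Objective of the scalar proximal problem. -/
def obj1 (ρ : ℝ → EReal) (y x : ℝ) : EReal :=
  (((1:ℝ)/2 * (y - x) ^ 2 : ℝ) : EReal) + ρ x

/-- `x` is the unique minimizer of `z ↦ ½(y−z)² + ρ(z)`. -/
def IsProx1 (ρ : ℝ → EReal) (y x : ℝ) : Prop :=
  (∀ z : ℝ, obj1 ρ y x ≤ obj1 ρ y z) ∧ ∀ z : ℝ, obj1 ρ y z ≤ obj1 ρ y x → z = x

/-- Objective of the proximal problem on `ℝ^p` (Euclidean norm). -/
def objPi {p : ℕ} (f : (Fin p → ℝ) → EReal) (y x : Fin p → ℝ) : EReal :=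
  (((1:ℝ)/2 * ∑ i, (y i - x i) ^ 2 : ℝ) : EReal) + f x

/-- `x` is the unique minimizer of `z ↦ ½‖y−z‖² + f(z)` on `ℝ^p`. -/
def IsProxPi {p : ℕ} (f : (Fin p → ℝ) → EReal) (y x : Fin p → ℝ) : Prop :=
  (∀ z, objPi f y x ≤ objPi f y z) ∧ ∀ z, objPi f y z ≤ objPi f y x → z = x

/-- Objective of the proximal problem on `L2(0,1)`. -/
def objL2 (f : L2 → EReal) (Y X : L2) : EReal :=
  (((1:ℝ)/2 * ∫ t, (Y t - X t) ^ 2 ∂unitMeasure : ℝ) : EReal) + f X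

/-- `P` is the unique minimizer of `X ↦ ½E[(Y−X)²] + f(X)` on `L2(0,1)`. -/
def IsProxL2 (f : L2 → EReal) (Y P : L2) : Prop :=
  (∀ X, objL2 f Y P ≤ objL2 f Y X) ∧ ∀ X, objL2 f Y X ≤ objL2 f Y P → X = P

/-- Permutation-symmetry of a function on `ℝ^p`. -/
def SymmPi {p : ℕ} (f : (Fin p → ℝ) → EReal) : Prop :=
  ∀ (σ : Equiv.Perm (Fin p)) (x : Fin p → ℝ), f (x ∘ σ) = f x

/-- Symmetry (law-invariance) of a function on `L2(0,1)`. -/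
def SymmL2 (f : L2 → EReal) : Prop :=
  ∀ X X' : L2, lawOf X = lawOf X' → f X = f X'

/-- `G` belongs to the subdifferential of `f` at `X`. -/
def InSubdiff (f : L2 → EReal) (X G : L2) : Prop :=
  ∀ X' : L2, f X + ((∫ t, G t * (X' t - X t) ∂unitMeasure : ℝ) : EReal) ≤ f X'

/-- Joint cyclic monotonicity of a set of measures on `ℝ²`. -/
def JointCycMono (K : Set (Measure (ℝ × ℝ))) : Prop :=
  ∀ (n : ℕ) (π : Fin n → Measure (ℝ × ℝ)), (∀ j, π j ∈ K) →
    ∀ X G : Fin n → L2, (∀ j, lawOf2 (X j) (G j) = π j) →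
      ∀ σ : Equiv.Perm (Fin n),
        ∑ j, ∫ t, X j t * G (σ j) t ∂unitMeasure ≤
          ∑ j, ∫ t, X j t * G j t ∂unitMeasure

/-- The standard Gaussian measure `N(0, I_p)` on `ℝ^p`. -/
def stdGaussPi (p : ℕ) : Measure (Fin p → ℝ) := Measure.pi fun _ => gaussianReal 0 1

/-- Convolution `μ * N(0, τ²)`. -/
def gaussConv (μ : Measure ℝ) (τ : ℝ) : Measure ℝ :=
  Measure.map (fun q : ℝ × ℝ => q.1 + q.2) (μ.prod (gaussianReal 0 (Real.toNNReal (τ ^ 2))))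

/-- Empirical distribution of the coordinates of a vector in `ℝ^p`. -/
def empDist {p : ℕ} (θ : Fin p → ℝ) : Measure ℝ :=
  ((p : ℝ≥0∞))⁻¹ • ∑ j : Fin p, Measure.dirac (θ j)

/-- Empirical joint distribution of the coordinate pairs of two vectors in `ℝ^p`. -/
def empPair {p : ℕ} (a b : Fin p → ℝ) : Measure (ℝ × ℝ) :=
  ((p : ℝ≥0∞))⁻¹ • ∑ j : Fin p, Measure.dirac (a j, b j)

/-- Non-decreasing and 1-Lipschitz (the class `PR₁`). -/
def IsPR1 (η : ℝ → ℝ) : Prop :=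
  Monotone η ∧ ∀ y y' : ℝ, |η y - η y'| ≤ |y - y'|


noncomputable section

/-- A Borel partition of `(0,1)` into `p` parts, each of Lebesgue measure `1/p`. -/
def IsUnifPartition (p : ℕ) (I : Fin p → Set ℝ) : Prop :=
  (∀ j, MeasurableSet (I j)) ∧ Pairwise (Function.onFun Disjoint I) ∧
    (⋃ j, I j) = Set.Ioo (0:ℝ) 1 ∧ ∀ j, volume (I j) = 1 / (p : ℝ≥0∞)

/-- `X ∈ L2(0,1)` represents the embedding `ι(x) = Σ_j x_j · 1_{I_j}` of `x ∈ ℝ^p`. -/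
def RepresentsEmbed {p : ℕ} (I : Fin p → Set ℝ) (x : Fin p → ℝ) (X : L2) : Prop :=
  (fun t => X t) =ᵐ[unitMeasure]
    fun t => ∑ j, Set.indicator (I j) (fun _ => x j) t

/-- `f : L2(0,1) → ℝ ∪ {+∞}` is an `L2` embedding of `fp : ℝ^p → ℝ ∪ {+∞}`,
i.e. `fp x = p · f(ι x)` for every `x` and every embedding `ι` of the above form. -/
def IsL2Embedding {p : ℕ} (fp : (Fin p → ℝ) → EReal) (f : L2 → EReal) : Prop :=
  ∀ (I : Fin p → Set ℝ), IsUnifPartition p I →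
    ∀ (x : Fin p → ℝ) (X : L2), RepresentsEmbed I x X →
      fp x = (p : EReal) * f X

end

section MyAux

namespace Aux

lemma edistrib (a r : ℝ) (ha : 0 ≤ a) (w : EReal) (hw : w ≠ ⊥) :
    (a : EReal) * ((r : EReal) + w) = ((a * r : ℝ) : EReal) + (a : EReal) * w := by
  induction w with
  | bot => exact absurd rfl hw
  | coe s =>
      rw [← EReal.coe_add, ← EReal.coe_mul, ← EReal.coe_mul, ← EReal.coe_add]
      norm_cast; ring
  | top =>
      rcases eq_or_lt_of_le ha with h0 | h0
      · simp [← h0]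
      · rw [EReal.add_top_of_ne_bot (by simp : (r:EReal) ≠ ⊥), EReal.mul_top_of_pos (by exact_mod_cast h0),
          EReal.add_top_of_ne_bot (EReal.coe_ne_bot _)]

-- strong convexity identity in a real inner product space
lemma quad_identity {E : Type*} [NormedAddCommGroup E] [InnerProductSpace ℝ E]
    (Y X Z : E) (a b : ℝ) (hab : a + b = 1) :
    (1/2) * ‖Y - (a • X + b • Z)‖ ^ 2 + a * b / 2 * ‖X - Z‖ ^ 2
      = a * ((1/2) * ‖Y - X‖ ^ 2) + b * ((1/2) * ‖Y - Z‖ ^ 2) := by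
  have hYW : Y - (a • X + b • Z) = a • (Y - X) + b • (Y - Z) := by
    have : Y = (a + b) • Y := by rw [hab, one_smul]
    calc Y - (a • X + b • Z) = (a + b) • Y - (a • X + b • Z) := by rw [← this]
    _ = a • (Y - X) + b • (Y - Z) := by
        rw [add_smul, smul_sub, smul_sub]; abel
  have hXZ : X - Z = (Y - Z) - (Y - X) := by abel
  rw [hYW, hXZ]
  set u := Y - X
  set v := Y - Z
  have h1 : ‖a • u + b • v‖ ^ 2 = a^2 * ‖u‖^2 + 2 * (a * b * inner ℝ u v) + b^2 * ‖v‖^2 := by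
    rw [norm_add_sq_real, real_inner_smul_left, real_inner_smul_right,
      norm_smul, norm_smul]
    simp only [Real.norm_eq_abs, mul_pow, sq_abs]
    ring
  have h2 : ‖v - u‖ ^ 2 = ‖v‖^2 - 2 * inner ℝ u v + ‖u‖^2 := by
    rw [norm_sub_sq_real, real_inner_comm u v]
  rw [h1, h2]
  linear_combination (‖u‖^2/2 * a + ‖v‖^2/2 * b) * hab

end Aux

namespace Aux2
open Aux

variable {E : Type*} [NormedAddCommGroup E] [InnerProductSpace ℝ E]

/-- The Moreau objective. -/
def G (f : E → EReal) (Y X : E) : EReal := ((1/2 * ‖Y - X‖^2 : ℝ) : EReal) + f X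

lemma G_ne_bot (f : E → EReal) (hbot : ∀ X, f X ≠ ⊥) (Y X : E) : G f Y X ≠ ⊥ := by
  rw [G]
  intro h
  exact hbot X ((EReal.add_eq_bot_iff.1 h).resolve_left (EReal.coe_ne_bot _))

lemma G_strong (f : E → EReal) (hbot : ∀ X, f X ≠ ⊥) (hconv : ConvexE f) (Y : E)
    (X Z : E) (a b : ℝ) (ha : 0 ≤ a) (hb : 0 ≤ b) (hab : a + b = 1) :
    G f Y (a • X + b • Z) + ((a * b / 2 * ‖X - Z‖^2 : ℝ) : EReal)
      ≤ (a : EReal) * G f Y X + (b : EReal) * G f Y Z := by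
  have hq := quad_identity Y X Z a b hab
  have hf := hconv X Z a b ha hb hab
  have lhs_eq : G f Y (a • X + b • Z) + ((a * b / 2 * ‖X - Z‖^2 : ℝ) : EReal)
      = ((a * (1/2 * ‖Y - X‖^2) + b * (1/2 * ‖Y - Z‖^2) : ℝ) : EReal) + f (a • X + b • Z) := by
    rw [G, add_comm (((1/2 * ‖Y - (a • X + b • Z)‖^2 : ℝ) : EReal)) (f _), add_assoc,
      ← EReal.coe_add, hq]
    exact add_comm _ _
  rw [lhs_eq, G, G, edistrib a _ ha _ (hbot X), edistrib b _ hb _ (hbot Z), EReal.coe_add]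
  calc ((a * (1/2 * ‖Y - X‖^2) : ℝ) : EReal) + ((b * (1/2 * ‖Y - Z‖^2) : ℝ) : EReal)
        + f (a • X + b • Z)
      ≤ ((a * (1/2 * ‖Y - X‖^2) : ℝ) : EReal) + ((b * (1/2 * ‖Y - Z‖^2) : ℝ) : EReal)
        + ((a : EReal) * f X + (b : EReal) * f Z) := add_le_add_right hf _
    _ = _ := by abel

lemma f_minorant (f : E → EReal) (hlsc : LowerSemicontinuous f) (hbot : ∀ X, f X ≠ ⊥)
    (X0 : E) (h0 : f X0 ≠ ⊤) (hconv : ConvexE f) :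
    ∃ c C : ℝ, 0 ≤ C ∧ ∀ X : E, ((c - C * ‖X - X0‖ : ℝ) : EReal) ≤ f X := by
  set cf := (f X0).toReal with hcf
  have hfX0 : f X0 = (cf : EReal) := (EReal.coe_toReal h0 (hbot X0)).symm
  have hev : ∀ᶠ X in nhds X0, ((cf - 1 : ℝ) : EReal) < f X := by
    apply hlsc X0
    rw [hfX0]; exact_mod_cast sub_one_lt cf
  rw [Metric.eventually_nhds_iff] at hev
  obtain ⟨δ, hδ, hball⟩ := hev
  refine ⟨cf - 1, 2/δ, by positivity, fun X => ?_⟩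
  by_cases hT : f X = ⊤
  · rw [hT]; exact le_top
  have hfX : f X = ((f X).toReal : EReal) := (EReal.coe_toReal hT (hbot X)).symm
  set r := (f X).toReal
  set d := ‖X - X0‖ with hd
  have hd0 : 0 ≤ d := norm_nonneg _
  rw [hfX, EReal.coe_le_coe_iff]
  by_cases hcase : d < δ
  · have := hball (show dist X X0 < δ by rw [dist_eq_norm]; exact hcase)
    rw [hfX, EReal.coe_lt_coe_iff] at this
    have h2 : 0 ≤ 2/δ * d := by positivity
    linarith
  · push_neg at hcase
    have hdpos : 0 < d := lt_of_lt_of_le hδ hcase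
    set t := δ / (2 * d) with ht
    have ht0 : 0 < t := by positivity
    have ht1 : t ≤ 1/2 := by
      rw [ht, div_le_div_iff₀ (by positivity) (by norm_num)]
      linarith
    have htd : t * d = δ / 2 := by
      rw [ht]; field_simp
    have hW : (1 - t) • X0 + t • X - X0 = t • (X - X0) := by
      rw [sub_smul, one_smul, smul_sub]; abel
    have hWball : dist ((1 - t) • X0 + t • X) X0 < δ := by
      rw [dist_eq_norm, hW, norm_smul, Real.norm_eq_abs, abs_of_pos ht0, ← hd, htd]
      linarith
    have hfW := hconv X0 X (1 - t) t (by linarith) (le_of_lt ht0) (by ring)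
    have hlb := hball hWball
    rw [hfX0, hfX, ← EReal.coe_mul, ← EReal.coe_mul, ← EReal.coe_add] at hfW
    have hlt : ((cf - 1 : ℝ) : EReal) < (((1-t) * cf + t * r : ℝ) : EReal) :=
      lt_of_lt_of_le hlb hfW
    rw [EReal.coe_lt_coe_iff] at hlt
    have key : t * cf - 1 < t * r := by nlinarith
    rw [ht] at key
    have h2d : (0:ℝ) < 2 * d := by positivity
    have h3 := mul_lt_mul_of_pos_right key h2d
    have e1 : (δ/(2*d) * cf - 1) * (2*d) = δ*cf - 2*d := by field_simp
    have e2 : δ/(2*d) * r * (2*d) = δ * r := by field_simp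
    rw [e1, e2] at h3
    have hmul : δ * (cf - 1 - 2/δ*d) ≤ δ * r := by
      have expand : δ * (cf - 1 - 2/δ*d) = δ*cf - δ - 2*d := by
        field_simp
      rw [expand]; linarith
    exact le_of_mul_le_mul_left hmul hδ

lemma G_bddBelow (f : E → EReal) (hbot : ∀ X, f X ≠ ⊥) (Y X0 : E) (c C : ℝ) (hC : 0 ≤ C)
    (hmin : ∀ X : E, ((c - C * ‖X - X0‖ : ℝ) : EReal) ≤ f X) :
    ∀ X : E, ((c - C * ‖Y - X0‖ - C^2/2 : ℝ) : EReal) ≤ G f Y X := by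
  intro X
  have tri : ‖X - X0‖ ≤ ‖X - Y‖ + ‖Y - X0‖ := norm_sub_le_norm_sub_add_norm_sub X Y X0
  rw [norm_sub_rev X Y] at tri
  have hreal : c - C * ‖Y - X0‖ - C^2/2 ≤ 1/2 * ‖Y - X‖^2 + (c - C * ‖X - X0‖) := by
    nlinarith [sq_nonneg (‖Y - X‖ - C), norm_nonneg (Y - X), norm_nonneg (Y - X0), norm_nonneg (X - X0)]
  calc ((c - C * ‖Y - X0‖ - C^2/2 : ℝ) : EReal)
      ≤ ((1/2 * ‖Y - X‖^2 + (c - C * ‖X - X0‖) : ℝ) : EReal) := EReal.coe_le_coe_iff.2 hreal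
    _ = ((1/2 * ‖Y - X‖^2 : ℝ) : EReal) + ((c - C * ‖X - X0‖ : ℝ) : EReal) := EReal.coe_add _ _
    _ ≤ G f Y X := add_le_add_right (hmin X) _

theorem exists_isProx [CompleteSpace E] (f : E → EReal) (hlsc : LowerSemicontinuous f)
    (hbot : ∀ X, f X ≠ ⊥) (hproper : ∃ X, f X ≠ ⊤) (hconv : ConvexE f) (Y : E) :
    ∃ P : E, (∀ X, G f Y P ≤ G f Y X) ∧ ∀ X, G f Y X ≤ G f Y P → X = P := by
  obtain ⟨X0, hX0⟩ := hproper
  obtain ⟨c, C, hC, hmin⟩ := f_minorant f hlsc hbot X0 hX0 hconv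
  have hB := G_bddBelow f hbot Y X0 c C hC hmin
  set B := c - C * ‖Y - X0‖ - C^2/2 with hBdef
  set T := {r : ℝ | ∃ X, G f Y X ≤ (r : EReal)} with hTdef
  have hGX0 : G f Y X0 = ((1/2 * ‖Y - X0‖^2 + (f X0).toReal : ℝ) : EReal) := by
    rw [G, EReal.coe_add]
    exact congrArg (((1/2 * ‖Y - X0‖^2 : ℝ) : EReal) + ·) (EReal.coe_toReal hX0 (hbot X0)).symm
  have hTne : T.Nonempty := ⟨1/2 * ‖Y - X0‖^2 + (f X0).toReal, X0, le_of_eq hGX0⟩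
  have hbdd : BddBelow T := ⟨B, fun r ⟨X, hX⟩ => by
    have := le_trans (hB X) hX; exact_mod_cast this⟩
  set m := sInf T with hmdef
  have hm : ∀ X, (m : EReal) ≤ G f Y X := by
    intro X
    by_contra hcon
    push_neg at hcon
    have hne_bot := G_ne_bot f hbot Y X
    have hne_top : G f Y X ≠ ⊤ := ne_top_of_lt hcon
    have hmem : (G f Y X).toReal ∈ T := ⟨X, le_of_eq (EReal.coe_toReal hne_top hne_bot).symm⟩
    have h2 : m ≤ (G f Y X).toReal := csInf_le hbdd hmem
    rw [← EReal.coe_toReal hne_top hne_bot, EReal.coe_lt_coe_iff] at hcon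
    linarith
  have hseq : ∀ n : ℕ, ∃ X, G f Y X ≤ ((m + 1/((n:ℝ)+1) : ℝ) : EReal) := by
    intro n
    have hpos : (0:ℝ) < 1/((n:ℝ)+1) := by positivity
    obtain ⟨r, hrT, hrlt⟩ := exists_lt_of_csInf_lt hTne (by linarith : sInf T < m + 1/((n:ℝ)+1))
    obtain ⟨X, hX⟩ := hrT
    exact ⟨X, le_trans hX (by exact_mod_cast le_of_lt hrlt)⟩
  choose u hu using hseq
  have hhalf : (0:ℝ) ≤ 1/2 := by norm_num
  have hkey : ∀ i j : ℕ, ‖u i - u j‖^2 ≤ 4 * (1/((i:ℝ)+1) + 1/((j:ℝ)+1)) := by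
    intro i j
    have hst := G_strong f hbot hconv Y (u i) (u j) (1/2) (1/2) hhalf hhalf (by norm_num)
    have h1 : (m : EReal) + ((1/2*(1/2)/2 * ‖u i - u j‖^2 : ℝ) : EReal)
        ≤ ((1/2 : ℝ) : EReal) * G f Y (u i) + ((1/2 : ℝ) : EReal) * G f Y (u j) :=
      le_trans (add_le_add_left (hm _) _) hst
    have h2 : ((1/2 : ℝ) : EReal) * G f Y (u i)
        ≤ ((1/2 : ℝ) : EReal) * ((m + 1/((i:ℝ)+1) : ℝ) : EReal) :=
      mul_le_mul_of_nonneg_left (hu i) (by exact_mod_cast hhalf)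
    have h3 : ((1/2 : ℝ) : EReal) * G f Y (u j)
        ≤ ((1/2 : ℝ) : EReal) * ((m + 1/((j:ℝ)+1) : ℝ) : EReal) :=
      mul_le_mul_of_nonneg_left (hu j) (by exact_mod_cast hhalf)
    have h4 : ((m + 1/2*(1/2)/2 * ‖u i - u j‖^2 : ℝ) : EReal)
        ≤ ((1/2 * (m + 1/((i:ℝ)+1)) + 1/2 * (m + 1/((j:ℝ)+1)) : ℝ) : EReal) := by
      rw [EReal.coe_add, EReal.coe_add (1/2 * (m + 1/((i:ℝ)+1))), EReal.coe_mul, EReal.coe_mul]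
      exact le_trans h1 (add_le_add h2 h3)
    rw [EReal.coe_le_coe_iff] at h4
    linarith
  have hcauchy : CauchySeq u := by
    rw [Metric.cauchySeq_iff]
    intro ε hε
    obtain ⟨N, hN⟩ := exists_nat_gt (8/ε^2)
    have hN0 : (0:ℝ) < N := lt_of_le_of_lt (by positivity) hN
    refine ⟨N, fun i hi j hj => ?_⟩
    have hi' : 1/((i:ℝ)+1) ≤ 1/(N:ℝ) := by
      apply one_div_le_one_div_of_le hN0
      have : (N:ℝ) ≤ i := by exact_mod_cast hi
      linarith
    have hj' : 1/((j:ℝ)+1) ≤ 1/(N:ℝ) := by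
      apply one_div_le_one_div_of_le hN0
      have : (N:ℝ) ≤ j := by exact_mod_cast hj
      linarith
    have h8 : 8/(N:ℝ) < ε^2 := by
      rw [div_lt_iff₀ hN0]
      have := (div_lt_iff₀ (by positivity : (0:ℝ) < ε^2)).1 hN
      linarith
    have hd2 : ‖u i - u j‖^2 < ε^2 := by
      have := hkey i j
      have : ‖u i - u j‖^2 ≤ 8/(N:ℝ) := by
        have h48 : 4 * (1/((i:ℝ)+1) + 1/((j:ℝ)+1)) ≤ 8/(N:ℝ) := by
          rw [show (8:ℝ)/(N:ℝ) = 4*(1/(N:ℝ)+1/(N:ℝ)) by ring]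
          linarith
        linarith
      linarith
    rw [dist_eq_norm]
    nlinarith [norm_nonneg (u i - u j), hε]
  obtain ⟨P, hP⟩ := cauchySeq_tendsto_of_complete hcauchy
  have hGP : G f Y P ≤ (m : EReal) := by
    by_contra hcon
    push_neg at hcon
    obtain ⟨c1, hc1, hc2⟩ := EReal.exists_between_coe_real hcon
    set α := 1/2 * ‖Y - P‖^2 with hα
    have hfP : ((c1 - α : ℝ) : EReal) < f P := by
      rcases eq_or_ne (f P) ⊤ with h | h
      · rw [h]; exact EReal.coe_lt_top _
      · have hfPr : f P = ((f P).toReal : EReal) := (EReal.coe_toReal h (hbot P)).symm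
        rw [G, hfPr, ← EReal.coe_add, EReal.coe_lt_coe_iff] at hc2
        rw [hfPr, EReal.coe_lt_coe_iff]
        linarith
    obtain ⟨c2, hc21, hc22⟩ := EReal.exists_between_coe_real hfP
    have hmargin : c1 - α < c2 := by exact_mod_cast hc21
    have ev1 : ∀ᶠ X in nhds P, (c2 : EReal) < f X := hlsc P _ hc22
    have hqcont : Continuous fun X : E => 1/2 * ‖Y - X‖^2 :=
      continuous_const.mul ((continuous_const.sub continuous_id).norm.pow 2)
    have ev2 : ∀ᶠ X in nhds P, α - (c2 - (c1 - α)) < 1/2 * ‖Y - X‖^2 :=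
      (hqcont.continuousAt).eventually (eventually_gt_nhds (by linarith : α - (c2 - (c1 - α)) < α))
    have evc : ∀ᶠ X in nhds P, (c1 : EReal) ≤ G f Y X := by
      filter_upwards [ev1, ev2] with X h1 h2
      rw [G]
      calc (c1 : EReal) = ((α - (c2 - (c1 - α)) + c2 : ℝ) : EReal) := by congr 1; ring
        _ = ((α - (c2 - (c1 - α)) : ℝ) : EReal) + ((c2 : ℝ) : EReal) := EReal.coe_add _ _
        _ ≤ ((1/2 * ‖Y - X‖^2 : ℝ) : EReal) + f X :=
            add_le_add (EReal.coe_le_coe_iff.2 (le_of_lt h2)) (le_of_lt h1)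
    have evn : ∀ᶠ n in atTop, (c1 : EReal) ≤ G f Y (u n) := hP.eventually evc
    have hc1r : m < c1 := by exact_mod_cast hc1
    have evm : ∀ᶠ n : ℕ in atTop, m + 1/((n:ℝ)+1) < c1 := by
      have htnd := tendsto_one_div_add_atTop_nhds_zero_nat (𝕜 := ℝ)
      filter_upwards [htnd.eventually (eventually_lt_nhds (by linarith : (0:ℝ) < c1 - m))] with n hn
      linarith
    obtain ⟨n, hn1, hn2⟩ := (evn.and evm).exists
    have hcontr := le_trans hn1 (hu n)
    rw [EReal.coe_le_coe_iff] at hcontr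
    linarith
  have hGPm : G f Y P = (m : EReal) := le_antisymm hGP (hm P)
  refine ⟨P, fun X => by rw [hGPm]; exact hm X, fun X hX => ?_⟩
  have hGXm : G f Y X = (m : EReal) := le_antisymm (le_trans hX hGP) (hm X)
  have hst := G_strong f hbot hconv Y X P (1/2) (1/2) hhalf hhalf (by norm_num)
  rw [hGXm, hGPm, ← EReal.coe_mul, ← EReal.coe_add] at hst
  have h1 : ((m + 1/2*(1/2)/2 * ‖X - P‖^2 : ℝ) : EReal) ≤ ((1/2 * m + 1/2 * m : ℝ) : EReal) := by
    rw [EReal.coe_add m]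
    exact le_trans (add_le_add_left (hm _) _) hst
  rw [EReal.coe_le_coe_iff] at h1
  have hd2 : ‖X - P‖^2 ≤ 0 := by linarith
  have hd0 : ‖X - P‖ = 0 := by nlinarith [norm_nonneg (X - P)]
  have := norm_sub_eq_zero_iff.1 hd0
  exact this

end Aux2

namespace Aux3

instance : IsFiniteMeasure unitMeasure := by
  constructor
  rw [unitMeasure, Measure.restrict_apply_univ]
  simp [Real.volume_Ioo]

/-- the uniform partition of (0,1) into p half-open pieces -/
def part (p : ℕ) (j : Fin p) : Set ℝ :=
  Set.Ioo (0:ℝ) 1 ∩ Set.Ico (((j:ℕ):ℝ)/p) ((((j:ℕ):ℝ)+1)/p)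

lemma part_isUnifPartition (p : ℕ) (hp : 1 ≤ p) : IsUnifPartition p (part p) := by
  have hp0 : (0:ℝ) < p := by exact_mod_cast hp
  refine ⟨fun j => measurableSet_Ioo.inter measurableSet_Ico, ?_, ?_, ?_⟩
  · intro j k hjk
    rw [Function.onFun, Set.disjoint_left]
    rintro t ⟨_, hj1, hj2⟩ ⟨_, hk1, hk2⟩
    rcases lt_or_gt_of_ne hjk with h | h
    · have hc : ((j:ℕ):ℝ) + 1 ≤ ((k:ℕ):ℝ) := by exact_mod_cast (Fin.lt_iff_val_lt_val.1 h)
      have h1 : (((j:ℕ):ℝ)+1)/p ≤ ((k:ℕ):ℝ)/p := by gcongr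
      linarith
    · have hc : ((k:ℕ):ℝ) + 1 ≤ ((j:ℕ):ℝ) := by exact_mod_cast (Fin.lt_iff_val_lt_val.1 h)
      have h1 : (((k:ℕ):ℝ)+1)/p ≤ ((j:ℕ):ℝ)/p := by gcongr
      linarith
  · apply Set.eq_of_subset_of_subset
    · exact Set.iUnion_subset fun j => Set.inter_subset_left
    · intro t ht
      have ht0 : 0 < t := ht.1
      have ht1 : t < 1 := ht.2
      have htp : t * p < p := by nlinarith
      have hfl : Nat.floor (t * p) < p := by
        rw [Nat.floor_lt (by positivity)]
        exact htp
      refine Set.mem_iUnion.2 ⟨⟨Nat.floor (t * p), hfl⟩, ht, ?_, ?_⟩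
      · rw [div_le_iff₀ hp0]
        exact Nat.floor_le (by positivity)
      · rw [lt_div_iff₀ hp0]
        exact_mod_cast Nat.lt_floor_add_one (t * p)
  · intro j
    have hj1 : ((j:ℕ):ℝ) + 1 ≤ p := by exact_mod_cast j.2
    have goal1 : ENNReal.ofReal (1/(p:ℝ)) = 1 / (p : ℝ≥0∞) := by
      rw [one_div, one_div, ENNReal.ofReal_inv_of_pos hp0, ENNReal.ofReal_natCast]
    by_cases hj : (j:ℕ) = 0
    · have heq : part p j = Set.Ioo 0 (1/(p:ℝ)) := by
        ext t
        simp only [part, hj, Nat.cast_zero, zero_add, zero_div, Set.mem_inter_iff,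
          Set.mem_Ioo, Set.mem_Ico]
        constructor
        · rintro ⟨⟨h1, _⟩, _, h4⟩; exact ⟨h1, h4⟩
        · rintro ⟨h1, h2⟩
          have hple : 1/(p:ℝ) ≤ 1 := by rw [div_le_one hp0]; exact_mod_cast hp
          exact ⟨⟨h1, lt_of_lt_of_le h2 hple⟩, le_of_lt h1, h2⟩
      rw [heq, Real.volume_Ioo, sub_zero]
      exact goal1
    · have hj1' : 1 ≤ (j:ℕ) := Nat.one_le_iff_ne_zero.2 hj
      have hjpos : (0:ℝ) < ((j:ℕ):ℝ)/p := by
        apply div_pos _ hp0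
        exact_mod_cast hj1'
      have heq : part p j = Set.Ico (((j:ℕ):ℝ)/p) ((((j:ℕ):ℝ)+1)/p) := by
        apply Set.inter_eq_self_of_subset_right
        rintro t ⟨h1, h2⟩
        constructor
        · exact lt_of_lt_of_le hjpos h1
        · calc t < (((j:ℕ):ℝ)+1)/p := h2
            _ ≤ 1 := by rw [div_le_one hp0]; exact hj1
      rw [heq, Real.volume_Ico, div_sub_div_same, add_sub_cancel_left]
      exact goal1


variable {p : ℕ} {I : Fin p → Set ℝ}

/-- step function -/
def stepFun (I : Fin p → Set ℝ) (x : Fin p → ℝ) : ℝ → ℝ :=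
  fun t => ∑ j, Set.indicator (I j) (fun _ => x j) t

lemma stepFun_eq_of_mem (hdisj : Pairwise (Function.onFun Disjoint I)) (x : Fin p → ℝ)
    {t : ℝ} {j : Fin p} (ht : t ∈ I j) : stepFun I x t = x j := by
  rw [stepFun]
  rw [Finset.sum_eq_single_of_mem j (Finset.mem_univ j)]
  · exact Set.indicator_of_mem ht _
  · intro k _ hkj
    apply Set.indicator_of_notMem
    exact fun htk => (Set.disjoint_left.1 (hdisj hkj) htk) ht

lemma stepFun_eq_zero (x : Fin p → ℝ) {t : ℝ} (ht : ∀ j, t ∉ I j) : stepFun I x t = 0 := by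
  rw [stepFun]
  apply Finset.sum_eq_zero
  intro k _
  exact Set.indicator_of_notMem (ht k) _

lemma stepFun_measurable (hI : ∀ j, MeasurableSet (I j)) (x : Fin p → ℝ) :
    Measurable (stepFun I x) := by
  apply Finset.measurable_sum
  intro j _
  exact measurable_const.indicator (hI j)

lemma stepFun_memℒp (hI : ∀ j, MeasurableSet (I j)) (x : Fin p → ℝ) :
    MemLp (stepFun I x) 2 unitMeasure := by
  apply MemLp.of_bound ((stepFun_measurable hI x).aestronglyMeasurable) (∑ j, ‖x j‖)
  apply ae_of_all
  intro t
  rw [stepFun]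
  refine le_trans (norm_sum_le _ _) (Finset.sum_le_sum fun j _ => ?_)
  exact norm_indicator_le_norm_self _ t

lemma stepFun_sub (x z : Fin p → ℝ) (t : ℝ) :
    stepFun I x t - stepFun I z t = stepFun I (x - z) t := by
  rw [stepFun, stepFun, stepFun, ← Finset.sum_sub_distrib]
  congr 1
  ext j
  by_cases h : t ∈ I j
  · rw [Set.indicator_of_mem h, Set.indicator_of_mem h, Set.indicator_of_mem h]
    rfl
  · rw [Set.indicator_of_notMem h, Set.indicator_of_notMem h, Set.indicator_of_notMem h]
    ring

lemma stepFun_sq (hdisj : Pairwise (Function.onFun Disjoint I)) (x : Fin p → ℝ) (t : ℝ) :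
    (stepFun I x t)^2 = stepFun I (fun j => (x j)^2) t := by
  by_cases h : ∃ j, t ∈ I j
  · obtain ⟨j, hj⟩ := h
    rw [stepFun_eq_of_mem hdisj x hj, stepFun_eq_of_mem hdisj _ hj]
  · push_neg at h
    rw [stepFun_eq_zero x h, stepFun_eq_zero _ h]
    ring

lemma unitMeasure_part (hpart : IsUnifPartition p I) (j : Fin p) :
    unitMeasure (I j) = 1 / (p : ℝ≥0∞) := by
  rw [unitMeasure, Measure.restrict_apply (hpart.1 j)]
  rw [Set.inter_eq_self_of_subset_left (hpart.2.2.1 ▸ Set.subset_iUnion I j)]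
  exact hpart.2.2.2 j

lemma integral_stepFun (hpart : IsUnifPartition p I) (x : Fin p → ℝ) :
    ∫ t, stepFun I x t ∂unitMeasure = ∑ j, x j / p := by
  rw [show (fun t => stepFun I x t) = fun t => ∑ j, Set.indicator (I j) (fun _ => x j) t from rfl]
  rw [integral_finset_sum _ (fun j _ => (integrable_const (x j)).indicator (hpart.1 j))]
  congr 1
  ext j
  rw [integral_indicator_const _ (hpart.1 j), measureReal_def, unitMeasure_part hpart j, smul_eq_mul]
  rw [one_div, ENNReal.toReal_inv]
  simp [div_eq_mul_inv, mul_comm]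

lemma map_stepFun (hp : 1 ≤ p) (hpart : IsUnifPartition p I) (x : Fin p → ℝ) :
    Measure.map (stepFun I x) unitMeasure = empDist x := by
  ext A hA
  rw [Measure.map_apply (stepFun_measurable hpart.1 x) hA]
  have hpre : MeasurableSet (stepFun I x ⁻¹' A) := (stepFun_measurable hpart.1 x) hA
  rw [unitMeasure, Measure.restrict_apply hpre, ← hpart.2.2.1, Set.inter_iUnion]
  rw [measure_iUnion (fun j k hjk => ((hpart.2.1 hjk).inter_left' _).inter_right' _)
    (fun j => hpre.inter (hpart.1 j))]
  rw [tsum_fintype]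
  have hterm : ∀ j : Fin p, volume (stepFun I x ⁻¹' A ∩ I j)
      = (p : ℝ≥0∞)⁻¹ * Measure.dirac (x j) A := by
    intro j
    by_cases hmem : x j ∈ A
    · have : stepFun I x ⁻¹' A ∩ I j = I j := by
        apply Set.inter_eq_self_of_subset_right
        intro t htj
        rw [Set.mem_preimage, stepFun_eq_of_mem hpart.2.1 x htj]
        exact hmem
      rw [this, hpart.2.2.2 j, Measure.dirac_apply' _ hA, Set.indicator_of_mem hmem,
        Pi.one_apply, mul_one, one_div]
    · have : stepFun I x ⁻¹' A ∩ I j = ∅ := by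
        apply Set.eq_empty_iff_forall_notMem.2
        rintro t ⟨htA, htj⟩
        rw [Set.mem_preimage, stepFun_eq_of_mem hpart.2.1 x htj] at htA
        exact hmem htA
      rw [this, Measure.dirac_apply' _ hA, Set.indicator_of_notMem hmem, measure_empty, mul_zero]
  rw [Finset.sum_congr rfl (fun j _ => hterm j)]
  rw [empDist, Measure.coe_smul, Pi.smul_apply, Measure.coe_finset_sum, Finset.sum_apply,
    smul_eq_mul, Finset.mul_sum]

lemma integral_sub_sq (Y X : L2) :
    ∫ t, (Y t - X t) ^ 2 ∂unitMeasure = ‖Y - X‖ ^ 2 := by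
  have h1 : ‖Y - X‖ ^ 2 = (inner (𝕜 := ℝ) (Y - X) (Y - X) : ℝ) :=
    (real_inner_self_eq_norm_sq _).symm
  rw [h1, MeasureTheory.L2.inner_def]
  apply integral_congr_ae
  filter_upwards [Lp.coeFn_sub Y X] with t ht
  rw [ht]
  simp [RCLike.inner_apply, conj_trivial, sq]

lemma objL2_eq_G (f : L2 → EReal) (Y X : L2) : objL2 f Y X = Aux2.G f Y X := by
  rw [objL2, Aux2.G, integral_sub_sq]

lemma integral_sub_sq_step (hpart : IsUnifPartition p I) (y x : Fin p → ℝ) (Y X : L2)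
    (hY : RepresentsEmbed I y Y) (hX : RepresentsEmbed I x X) :
    ∫ t, (Y t - X t) ^ 2 ∂unitMeasure = (∑ j, (y j - x j) ^ 2) / p := by
  have hcongr : (fun t => (Y t - X t) ^ 2) =ᵐ[unitMeasure]
      fun t => stepFun I (fun j => (y j - x j) ^ 2) t := by
    filter_upwards [hY, hX] with t h1 h2
    have : Y t - X t = stepFun I (y - x) t := by
      rw [h1, h2]
      exact stepFun_sub y x t
    rw [this, stepFun_sq hpart.2.1]
    congr 1
  rw [integral_congr_ae hcongr, integral_stepFun hpart, Finset.sum_div]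

lemma objPi_eq_mul (hp : 1 ≤ p) (hpart : IsUnifPartition p I)
    (fp : (Fin p → ℝ) → EReal) (f : L2 → EReal) (hfbot : ∀ X, f X ≠ ⊥)
    (hembed : IsL2Embedding fp f)
    (y x : Fin p → ℝ) (Y X : L2) (hY : RepresentsEmbed I y Y) (hX : RepresentsEmbed I x X) :
    objPi fp y x = ((p : ℕ) : EReal) * objL2 f Y X := by
  have hp0 : (0:ℝ) < p := by exact_mod_cast hp
  rw [objL2, integral_sub_sq_step hpart y x Y X hY hX]
  rw [show ((p : ℕ) : EReal) = (((p:ℝ) : ℝ) : EReal) from (EReal.coe_coe_eq_natCast p).symm]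
  rw [Aux.edistrib (p:ℝ) _ (le_of_lt hp0) _ (hfbot X)]
  rw [objPi, hembed I hpart x X hX,
    show ((p : ℕ) : EReal) = (((p:ℝ) : ℝ) : EReal) from (EReal.coe_coe_eq_natCast p).symm]
  congr 2
  field_simp

end Aux3

end MyAux

open Aux3 in
/-- Proposition: the finite-dimensional proximal operator is computed
coordinatewise by the effective scalar representation of an `L2` embedding. -/
theorem prox_embedding_coordinatewise (p : ℕ) (hp : 1 ≤ p)
    (fp : (Fin p → ℝ) → EReal)
    (hlsc : LowerSemicontinuous fp) (hbot : ∀ x, fp x ≠ ⊥) (hproper : ∃ x, fp x ≠ ⊤)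
    (hsymm : SymmPi fp) (hconv : ConvexE fp)
    (f : L2 → EReal)
    (hfsymm : SymmL2 f) (hflsc : LowerSemicontinuous f) (hfbot : ∀ X, f X ≠ ⊥)
    (hfproper : ∃ X, f X ≠ ⊤) (hfconv : ConvexE f)
    (hembed : IsL2Embedding fp f)
    (A : Measure ℝ → ℝ → ℝ)
    (hA : ∀ Y P : L2, IsProxL2 f Y P →
      (fun t => P t) =ᵐ[unitMeasure] fun t => A (lawOf Y) (Y t)) :
    ∀ (y Px : Fin p → ℝ), IsProxPi fp y Px →
      ∀ i : Fin p, Px i = A (empDist y) (y i) := by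
  intro y Px hPx i
  have hpart := part_isUnifPartition p hp
  set I := part p
  -- the embedded Y
  have hYmem := stepFun_memℒp hpart.1 y
  set Y : L2 := hYmem.toLp _ with hYdef
  have hYrep : RepresentsEmbed I y Y := hYmem.coeFn_toLp
  -- prox of f at Y exists
  obtain ⟨P, hPmin, hPuniq⟩ := Aux2.exists_isProx f hflsc hfbot hfproper hfconv Y
  have hprox : IsProxL2 f Y P := by
    constructor
    · intro X; rw [objL2_eq_G, objL2_eq_G]; exact hPmin X
    · intro X hX; rw [objL2_eq_G, objL2_eq_G] at hX; exact hPuniq X hX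
  have hae := hA Y P hprox
  have hlaw : lawOf Y = empDist y := by
    rw [lawOf, Measure.map_congr hYrep]
    exact map_stepFun hp hpart y
  rw [hlaw] at hae
  set q : Fin p → ℝ := fun j => A (empDist y) (y j) with hqdef
  have hPq : RepresentsEmbed I q P := by
    have hmem : ∀ᵐ t ∂unitMeasure, t ∈ Set.Ioo (0:ℝ) 1 := by
      rw [unitMeasure]
      exact ae_restrict_mem measurableSet_Ioo
    filter_upwards [hae, hYrep, hmem] with t h1 h2 h3
    rw [← hpart.2.2.1] at h3
    obtain ⟨j, hj⟩ := Set.mem_iUnion.1 h3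
    show P t = stepFun I q t
    rw [stepFun_eq_of_mem hpart.2.1 q hj, h1, h2]
    show A (empDist y) (stepFun I y t) = q j
    rw [stepFun_eq_of_mem hpart.2.1 y hj]
  -- embedded Px
  have hPxmem := stepFun_memℒp hpart.1 Px
  set Xpx : L2 := hPxmem.toLp _ with hXdef
  have hPxrep : RepresentsEmbed I Px Xpx := hPxmem.coeFn_toLp
  have h1 : objPi fp y q = ((p:ℕ) : EReal) * objL2 f Y P :=
    objPi_eq_mul hp hpart fp f hfbot hembed y q Y P hYrep hPq
  have h2 : objPi fp y Px = ((p:ℕ) : EReal) * objL2 f Y Xpx :=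
    objPi_eq_mul hp hpart fp f hfbot hembed y Px Y Xpx hYrep hPxrep
  have hle : objL2 f Y P ≤ objL2 f Y Xpx := hprox.1 Xpx
  have hcomp : objPi fp y q ≤ objPi fp y Px := by
    rw [h1, h2]
    exact mul_le_mul_of_nonneg_left hle (by exact_mod_cast Nat.zero_le p)
  have hq : q = Px := hPx.2 q hcomp
  rw [← hq]


end
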